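/- Let ξ = Σ_{j=1}^n λ_j χ_{A_j} be an integer linear combination of characteristic functions of subsets A_j ⊆ ℕ whose pointwise sum is the zero function. Then ξ, viewed in the monoid ring ℤ[2^ℕ], lies in the ideal generated by the elements χ_{A⊔B} − χ_A − χ_B for disjoint A, B ⊆ ℕ. -/

import Mathlib

/-- The monoid `2^ℕ` of subsets of `ℕ` under intersection. -/
def SetMon : Type := Set ℕ

instance : CommMonoid SetMon where
  mul A B := (Set.inter (A : Set ℕ) (B : Set ℕ) : Set ℕ)
  one := (Set.univ : Set ℕ)
  mul_assoc a b c := Set.inter_assoc a b c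
  one_mul a := Set.univ_inter a
  mul_one a := Set.inter_univ a
  mul_comm a b := Set.inter_comm a b

/-- The basis element `χ_A` of the monoid ring `ℤ[2^ℕ]`. -/
noncomputable def chi (A : Set ℕ) : MonoidAlgebra ℤ SetMon :=
  MonoidAlgebra.single (A : SetMon) 1

/-- The generators `χ_{A⊔B} - χ_A - χ_B` (for `A, B` disjoint) of the ideal `I`. -/
def IGens : Set (MonoidAlgebra ℤ SetMon) :=
  {x | ∃ A B : Set ℕ, Disjoint A B ∧
    x = chi (A ∪ B) - chi A - chi B}

open Classical

lemma chi_empty_mem : chi ∅ ∈ Ideal.span IGens := by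
  have hg : chi (∅ ∪ ∅) - chi ∅ - chi ∅ ∈ IGens :=
    ⟨∅, ∅, by simp, rfl⟩
  have hg' : chi (∅ ∪ ∅) - chi ∅ - chi ∅ ∈ Ideal.span IGens := Ideal.subset_span hg
  have : chi (∅ ∪ ∅) - chi ∅ - chi ∅ = -chi ∅ := by
    rw [Set.union_empty]; ring
  rw [this] at hg'
  simpa using (Ideal.span IGens).neg_mem hg'

lemma union_mem {A B : Set ℕ} (h : Disjoint A B) :
    chi (A ∪ B) - chi A - chi B ∈ Ideal.span IGens :=
  Ideal.subset_span ⟨A, B, h, rfl⟩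

lemma sum_lemma {ι : Type*} [DecidableEq ι] (t : Finset ι) (f : ι → Set ℕ)
    (hd : ∀ i ∈ t, ∀ j ∈ t, i ≠ j → Disjoint (f i) (f j)) :
    chi (⋃ i ∈ t, f i) - ∑ i ∈ t, chi (f i) ∈ Ideal.span IGens := by
  induction t using Finset.induction_on with
  | empty => simpa using chi_empty_mem
  | @insert a s ha ih =>
    have hdisj : Disjoint (f a) (⋃ i ∈ s, f i) := by
      simp only [Set.disjoint_iUnion_right]
      intro i hi
      exact hd a (Finset.mem_insert_self a s) i (Finset.mem_insert_of_mem hi)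
        (fun h => ha (h ▸ hi))
    have ih' := ih (fun i hi j hj hij =>
      hd i (Finset.mem_insert_of_mem hi) j (Finset.mem_insert_of_mem hj) hij)
    have hU : (⋃ i ∈ insert a s, f i) = f a ∪ ⋃ i ∈ s, f i := by
      simp [Finset.set_biUnion_insert]
    rw [hU, Finset.sum_insert ha]
    have key := (Ideal.span IGens).add_mem (union_mem hdisj) ih'
    have : chi (f a ∪ ⋃ i ∈ s, f i) - chi (f a) - chi (⋃ i ∈ s, f i)
        + (chi (⋃ i ∈ s, f i) - ∑ i ∈ s, chi (f i))
        = chi (f a ∪ ⋃ i ∈ s, f i) - (chi (f a) + ∑ i ∈ s, chi (f i)) := by ring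
    rwa [this] at key

theorem stmt16 (n : ℕ) (A : Fin n → Set ℕ) (l : Fin n → ℤ)
    (hzero : ∀ x : ℕ, (∑ j, if x ∈ A j then l j else 0) = 0) :
    (∑ j, MonoidAlgebra.single ((A j : Set ℕ) : SetMon) (l j)) ∈
      Ideal.span IGens := by
  set I := Ideal.span IGens with hI
  -- atoms
  set E : Finset (Fin n) → Set ℕ := fun s => {x | ∀ j, j ∈ s ↔ x ∈ A j} with hE
  have hEd : ∀ s t : Finset (Fin n), s ≠ t → Disjoint (E s) (E t) := by
    intro s t hst
    rw [Set.disjoint_left]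
    intro x hxs hxt
    exact hst (Finset.ext fun j => (hxs j).trans (hxt j).symm)
  have hAj : ∀ j, A j = ⋃ s ∈ Finset.univ.filter (fun s : Finset (Fin n) => j ∈ s), E s := by
    intro j
    ext x
    simp only [Set.mem_iUnion, Finset.mem_filter, Finset.mem_univ, true_and]
    constructor
    · intro hx
      refine ⟨Finset.univ.filter (fun k => x ∈ A k), by simpa using hx, ?_⟩
      intro k; simp
    · rintro ⟨s, hjs, hxs⟩
      exact (hxs j).mp hjs
  -- rewrite each single as smul of chi
  have hsingle : ∀ j, MonoidAlgebra.single ((A j : Set ℕ) : SetMon) (l j)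
      = l j • chi (A j) := by
    intro j
    show _ = l j • MonoidAlgebra.single ((A j : Set ℕ) : SetMon) (1 : ℤ)
    rw [MonoidAlgebra.smul_single, smul_eq_mul, mul_one]
  -- chi (A j) ≡ sum of chi of atoms
  have hAmem : ∀ j, chi (A j) - ∑ s ∈ Finset.univ.filter (fun s : Finset (Fin n) => j ∈ s),
      chi (E s) ∈ I := by
    intro j
    have := sum_lemma (Finset.univ.filter (fun s : Finset (Fin n) => j ∈ s)) E
      (fun s _ t _ hst => hEd s t hst)
    rwa [← hAj j] at this
  have hgoal : (∑ j, MonoidAlgebra.single ((A j : Set ℕ) : SetMon) (l j))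
      = ∑ j, l j • chi (A j) := Finset.sum_congr rfl (fun j _ => hsingle j)
  have hstep : (∑ j, l j • chi (A j))
      - ∑ s : Finset (Fin n), (∑ j ∈ s, l j) • chi (E s) ∈ I := by
    have L : ∀ j, l j • ∑ s ∈ Finset.univ.filter (fun s : Finset (Fin n) => j ∈ s), chi (E s)
        = ∑ s : Finset (Fin n), (if j ∈ s then l j else 0) • chi (E s) := by
      intro j
      rw [Finset.smul_sum, Finset.sum_filter]
      exact Finset.sum_congr rfl (fun s _ => by split <;> simp)
    have R : ∀ s : Finset (Fin n), (∑ j ∈ s, l j) • chi (E s)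
        = ∑ j, (if j ∈ s then l j else 0) • chi (E s) := by
      intro s
      rw [← Finset.sum_smul, Finset.sum_ite_mem, Finset.univ_inter]
    have hswap : (∑ j, l j • ∑ s ∈ Finset.univ.filter (fun s : Finset (Fin n) => j ∈ s),
        chi (E s)) = ∑ s : Finset (Fin n), (∑ j ∈ s, l j) • chi (E s) := by
      simp only [L, R]
      exact Finset.sum_comm
    rw [← hswap]
    have heq : (∑ j, l j • chi (A j))
        - (∑ j, l j • ∑ s ∈ Finset.univ.filter (fun s : Finset (Fin n) => j ∈ s), chi (E s))
        = ∑ j, l j • (chi (A j) - ∑ s ∈ Finset.univ.filter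
            (fun s : Finset (Fin n) => j ∈ s), chi (E s)) := by
      simp only [smul_sub, Finset.sum_sub_distrib]
    rw [heq]
    exact Submodule.sum_mem I (fun j _ => by
      rw [zsmul_eq_mul]; exact Ideal.mul_mem_left I _ (hAmem j))
  -- each atom term is in I
  have hterm : ∀ s : Finset (Fin n), (∑ j ∈ s, l j) • chi (E s) ∈ I := by
    intro s
    by_cases hne : (E s).Nonempty
    · obtain ⟨x, hx⟩ := hne
      have hcoeff : (∑ j ∈ s, l j) = 0 := by
        have hs : s = Finset.univ.filter (fun j => x ∈ A j) := by
          ext j; simpa using hx j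
        rw [hs, Finset.sum_filter]
        exact hzero x
      rw [hcoeff, zero_smul]; exact I.zero_mem
    · have : E s = ∅ := Set.not_nonempty_iff_eq_empty.mp hne
      rw [this, zsmul_eq_mul]
      exact Ideal.mul_mem_left I _ chi_empty_mem
  rw [hgoal]
  have hsum : (∑ s : Finset (Fin n), (∑ j ∈ s, l j) • chi (E s)) ∈ I :=
    Submodule.sum_mem I (fun s _ => hterm s)
  have := I.add_mem hstep hsum
  simp at this ⊢; exact this
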